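/- Let $r \geq c \geq 1$. If $M \subseteq \mathbb{F}_2^r \setminus \{0\}$ contains no copy of $PG(c-1,2)$ (i.e., there is no $c$-dimensional subspace $W \leq \mathbb{F}_2^r$ with $W \setminus \{0\} \subseteq M$), then $|M| \leq 2^r - 2^{r-c+1}$. -/

import Mathlib

variable {r : ℕ}

local notation "V" => (Fin r → ZMod 2)

lemma key (c : ℕ) (hcr : c ≤ r) (E : Finset (Fin r → ZMod 2)) (hE0 : (0 : Fin r → ZMod 2) ∉ E)
    (hcard : E.card + 2 ≤ 2 ^ (r - c + 1)) :
    ∃ W : Submodule (ZMod 2) (Fin r → ZMod 2),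
      Module.finrank (ZMod 2) W = c ∧ ∀ x ∈ E, x ∉ W := by
  induction c with
  | zero =>
    refine ⟨⊥, by simp, fun x hx hxW => ?_⟩
    simp only [Submodule.mem_bot] at hxW
    exact hE0 (hxW ▸ hx)
  | succ c ih =>
    obtain ⟨W, hWrank, hWE⟩ := ih (le_of_lt hcr) (le_trans hcard (by
      apply Nat.pow_le_pow_right (by norm_num)
      omega))
    -- quotient
    have hfr : Module.finrank (ZMod 2) ((Fin r → ZMod 2) ⧸ W) = r - c := by
      have := Submodule.finrank_quotient_add_finrank W
      rw [hWrank] at this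
      have hV := Module.finrank_fin_fun (R := ZMod 2) (n := r)
      rw [hV] at this
      omega
    have hcardQ : Fintype.card ((Fin r → ZMod 2) ⧸ W) = 2 ^ (r - c) := by
      rw [Module.card_eq_pow_finrank (K := ZMod 2), hfr, ZMod.card]
    -- image of E in Q
    classical
    obtain ⟨q, hq⟩ : ∃ q : (Fin r → ZMod 2) ⧸ W, q ∉ insert (0 : (Fin r → ZMod 2) ⧸ W) (E.image W.mkQ) := by
      by_contra h
      push_neg at h
      have : Fintype.card ((Fin r → ZMod 2) ⧸ W) ≤ (insert (0 : (Fin r → ZMod 2) ⧸ W) (E.image W.mkQ)).card :=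
        Finset.card_le_card fun x _ => h x
      have h2 : (insert (0 : (Fin r → ZMod 2) ⧸ W) (E.image W.mkQ)).card ≤ E.card + 1 :=
        le_trans (Finset.card_insert_le _ _) (by
          have := Finset.card_image_le (s := E) (f := W.mkQ); omega)
      have h3 : E.card + 2 ≤ 2 ^ (r - c) := le_trans hcard (by
        apply Nat.pow_le_pow_right (by norm_num); omega)
      omega
    obtain ⟨v, hv⟩ := W.mkQ_surjective q
    have hq0 : q ≠ 0 := fun h => hq (by simp [h])
    have hvW : v ∉ W := fun h => hq0 (by rw [← hv]; exact (Submodule.Quotient.mk_eq_zero W).mpr h)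
    have hv0 : v ≠ 0 := fun h => hvW (h ▸ W.zero_mem)
    refine ⟨W ⊔ Submodule.span (ZMod 2) {v}, ?_, ?_⟩
    · have hinf : W ⊓ Submodule.span (ZMod 2) {v} = ⊥ := by
        rw [eq_bot_iff]
        rintro x ⟨hxW, hxs⟩
        obtain ⟨a, rfl⟩ := Submodule.mem_span_singleton.mp hxs
        fin_cases a
        · exact (Submodule.mem_bot _).mpr (zero_smul (ZMod 2) v)
        · exact absurd (show v ∈ W by have h1 : (1 : ZMod 2) • v ∈ W := hxW; simpa using h1) hvW
      have := Submodule.finrank_sup_add_finrank_inf_eq W (Submodule.span (ZMod 2) {v})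
      rw [hinf, hWrank, finrank_span_singleton hv0] at this
      simpa using this
    · intro x hxE hxW'
      obtain ⟨w, hw, z, hz, rfl⟩ := Submodule.mem_sup.mp hxW'
      obtain ⟨a, rfl⟩ := Submodule.mem_span_singleton.mp hz
      fin_cases a
      · exact hWE _ hxE (show w + (0 : ZMod 2) • v ∈ W by simpa using hw)
      · apply hq
        refine Finset.mem_insert_of_mem (Finset.mem_image.mpr ⟨_, hxE, ?_⟩)
        have : W.mkQ w = 0 := (Submodule.Quotient.mk_eq_zero W).mpr hw
        show W.mkQ (w + (1 : ZMod 2) • v) = q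
        simp [map_add, this, hv]

theorem bose_burton (r c : ℕ) (hc : 1 ≤ c) (hcr : c ≤ r)
    (M : Finset (Fin r → ZMod 2)) (h0 : (0 : Fin r → ZMod 2) ∉ M)
    (hM : ¬ ∃ W : Submodule (ZMod 2) (Fin r → ZMod 2),
      Module.finrank (ZMod 2) W = c ∧ ∀ x : Fin r → ZMod 2, x ∈ W → x ≠ 0 → x ∈ M) :
    M.card ≤ 2 ^ r - 2 ^ (r - c + 1) := by
  classical
  by_contra hbig
  push_neg at hbig
  set E : Finset (Fin r → ZMod 2) := Finset.univ \ insert 0 M with hE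
  have hcardV : Fintype.card (Fin r → ZMod 2) = 2 ^ r := by simp
  have hMc : M.card + 1 ≤ 2 ^ r := by
    have : (insert 0 M).card ≤ Fintype.card (Fin r → ZMod 2) :=
      Finset.card_le_univ _
    rw [Finset.card_insert_of_notMem h0] at this
    omega
  have hEcard : E.card = 2 ^ r - 1 - M.card := by
    rw [hE, Finset.card_sdiff_of_subset (Finset.subset_univ _), Finset.card_univ, hcardV,
      Finset.card_insert_of_notMem h0]
    omega
  have hpow : 2 ^ (r - c + 1) ≤ 2 ^ r := Nat.pow_le_pow_right (by norm_num) (by omega)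
  have hbound : E.card + 2 ≤ 2 ^ (r - c + 1) := by omega
  have hE0 : (0 : Fin r → ZMod 2) ∉ E := by simp [hE]
  obtain ⟨W, hWr, hWE⟩ := key c hcr E hE0 hbound
  apply hM
  refine ⟨W, hWr, fun x hxW hx0 => ?_⟩
  by_contra hxM
  exact hWE x (by simp [hE, hxM, hx0]) hxW
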